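/- For every θ ∈ (0, π/2) ∪ (3π/2, 2π) and every nonzero complex number w₂ with w₂² = d₂(θ), the matrices C₀(θ) and C₂(θ) violate Jørgensen's inequality: |trace(C₂(θ))² − 4| + |trace(C₂(θ)·C₀(θ)·C₂(θ)⁻¹·C₀(θ)⁻¹) − 2| < 1, where |·| denotes the complex absolute value. -/

import Mathlib

noncomputable section

open Matrix Complex

abbrev M2 := Matrix (Fin 2) (Fin 2) ℂ
abbrev SL2C := Matrix.SpecialLinearGroup (Fin 2) ℂ

instance : TopologicalSpace SL2C := instTopologicalSpaceSubtype

/-- The matrix `C₀(θ)`. -/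
def C0 (θ : ℝ) : M2 := (1 / 4 : ℂ) •
  !![((-Real.cos θ + 2 * Real.cos (2 * θ) + Real.cos (3 * θ) + 6 : ℝ) : ℂ) /
        ((Real.sin θ : ℂ)) ^ 2,
     4 * Complex.I * (Real.sin θ : ℂ) * (Real.cos θ : ℂ) / ((Real.cos θ : ℂ) - 1);
     2 * Complex.I * (Real.sin θ : ℂ) * (Real.cos θ : ℂ) / ((Real.sin (θ / 2) : ℂ)) ^ 2,
     4 * ((Real.cos θ : ℂ) + 1)]

/-- The unnormalized action `Â₁(θ)`. -/
def A1 (θ : ℝ) : M2 := (1 / 8 : ℂ) •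
  !![((-Real.cos θ + 2 * Real.cos (2 * θ) + Real.cos (3 * θ) + 6 : ℝ) : ℂ),
     -Complex.I * ((Real.sin θ + 2 * Real.sin (2 * θ) + Real.sin (3 * θ) : ℝ) : ℂ);
     Complex.I * ((Real.sin θ + 2 * Real.sin (2 * θ) + Real.sin (3 * θ) : ℝ) : ℂ),
     ((-7 * Real.cos θ - 2 * Real.cos (2 * θ) - Real.cos (3 * θ) + 2 : ℝ) : ℂ)]

/-- `d₁(θ) = det Â₁(θ)`. -/
def d1 (θ : ℝ) : ℂ :=
  ((5 - 28 * Real.cos θ - 4 * Real.cos (2 * θ) - 4 * Real.cos (3 * θ) -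
      Real.cos (4 * θ) : ℝ) : ℂ) / 32

/-- The normalized action `C₁(θ) = w₁⁻¹ · Â₁(θ)`. -/
def C1 (θ : ℝ) (w₁ : ℂ) : M2 := w₁⁻¹ • A1 θ

/-- The unnormalized action `Â₂(θ)`. -/
def A2 (θ : ℝ) : M2 := (1 / 8 : ℂ) •
  !![((7 * Real.cos θ - 2 * Real.cos (2 * θ) + Real.cos (3 * θ) + 2 : ℝ) : ℂ),
     -Complex.I * ((Real.sin θ - 2 * Real.sin (2 * θ) + Real.sin (3 * θ) : ℝ) : ℂ);
     -8 * Complex.I * ((Real.sin (θ / 2) ^ 2 * Real.sin θ * Real.cos θ : ℝ) : ℂ),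
     ((Real.cos θ + 2 * Real.cos (2 * θ) - Real.cos (3 * θ) + 6 : ℝ) : ℂ)]

/-- `d₂(θ) = det Â₂(θ)`. -/
def d2 (θ : ℝ) : ℂ :=
  ((5 + 28 * Real.cos θ - 4 * Real.cos (2 * θ) + 4 * Real.cos (3 * θ) -
      Real.cos (4 * θ) : ℝ) : ℂ) / 32

/-- The normalized action `C₂(θ) = w₂⁻¹ · Â₂(θ)`. -/
def C2 (θ : ℝ) (w₂ : ℂ) : M2 := w₂⁻¹ • A2 θ

/-- The unnormalized action `Â₃(θ)`, with determinant `cos θ`. -/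
def A3 (θ : ℝ) : M2 :=
  !![(((Real.cos (2 * θ) + 3) / 4 : ℝ) : ℂ),
     Complex.I * ((Real.sin (θ / 2) ^ 2 * Real.sin θ : ℝ) : ℂ);
     -Complex.I * ((Real.sin (θ / 2) ^ 2 * Real.sin θ : ℝ) : ℂ),
     (((Real.sin θ ^ 2 + 2 * Real.cos θ) / 2 : ℝ) : ℂ)]

/-- The normalized action `C₃(θ) = w₃⁻¹ · Â₃(θ)`. -/
def C3 (θ : ℝ) (w₃ : ℂ) : M2 := w₃⁻¹ • A3 θ

/-- The normalized action `C₄(θ)`. -/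
def C4 (θ : ℝ) (w₄ : ℂ) : M2 := (w₄ / 2) •
  !![-(((Real.cos (2 * θ) + 3) : ℝ) : ℂ) / (2 * (Real.cos θ : ℂ)),
     Complex.I * ((Real.sin θ + Real.tan θ : ℝ) : ℂ);
     -Complex.I * ((Real.sin θ + Real.tan θ : ℝ) : ℂ),
     (((4 * Real.cos θ + Real.cos (2 * θ) - 1) : ℝ) : ℂ) / (2 * (Real.cos θ : ℂ))]

/-!
STATEMENT 14: For every θ ∈ (0, π/2) ∪ (3π/2, 2π) and every nonzero w₂ with w₂² = d₂(θ),
the matrices C₀(θ), C₂(θ) violate Jørgensen's inequality: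
|tr(C₂)² − 4| + |tr(C₂C₀C₂⁻¹C₀⁻¹) − 2| < 1.
-/

set_option maxHeartbeats 2000000 in
theorem stmt14 (θ : ℝ)
    (hθ : θ ∈ Set.Ioo 0 (Real.pi / 2) ∪ Set.Ioo (3 * Real.pi / 2) (2 * Real.pi))
    (w₂ : ℂ) (hw₂ : w₂ ≠ 0) (h2 : w₂ ^ 2 = d2 θ) :
    ‖(C2 θ w₂).trace ^ 2 - 4‖ +
      ‖(C2 θ w₂ * C0 θ * (C2 θ w₂)⁻¹ * (C0 θ)⁻¹).trace - 2‖ < 1 := by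
  have hπ := Real.pi_pos
  -- real range facts
  have hx0 : 0 < Real.cos θ ∧ Real.cos θ < 1 := by
    rcases hθ with h | h
    · constructor
      · exact Real.cos_pos_of_mem_Ioo ⟨by linarith [h.1], h.2⟩
      · have := Real.cos_lt_cos_of_nonneg_of_le_pi (le_refl 0) (by linarith [h.2]) h.1
        simpa using this
    · have hc : Real.cos θ = Real.cos (2 * Real.pi - θ) := by
        rw [Real.cos_two_pi_sub]
      have h1' : 0 < 2 * Real.pi - θ := by linarith [h.2]
      have h2' : 2 * Real.pi - θ < Real.pi / 2 := by linarith [h.1]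
      constructor
      · rw [hc]; exact Real.cos_pos_of_mem_Ioo ⟨by linarith, h2'⟩
      · rw [hc]
        have := Real.cos_lt_cos_of_nonneg_of_le_pi (le_refl 0) (by linarith) h1'
        simpa using this
  obtain ⟨hx1, hx2⟩ := hx0
  -- complex abbreviations
  obtain ⟨c, hcc⟩ : ∃ c : ℂ, ((Real.cos θ : ℝ) : ℂ) = c := ⟨_, rfl⟩
  obtain ⟨s, hss⟩ : ∃ s : ℂ, ((Real.sin θ : ℝ) : ℂ) = s := ⟨_, rfl⟩
  obtain ⟨t, htt⟩ : ∃ t : ℂ, ((Real.sin (θ / 2) : ℝ) : ℂ) = t := ⟨_, rfl⟩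
  have hs2 : s ^ 2 = 1 - c ^ 2 := by
    have h := Real.sin_sq_add_cos_sq θ
    have hr : Real.sin θ ^ 2 = 1 - Real.cos θ ^ 2 := by linarith
    rw [← hss, ← hcc]; exact_mod_cast congrArg (fun r : ℝ => (r : ℂ)) hr
  have ht2 : t ^ 2 = (1 - c) / 2 := by
    have hcos := Real.cos_two_mul (θ / 2)
    have harg : 2 * (θ / 2) = θ := by ring
    rw [harg] at hcos
    have hsc := Real.sin_sq_add_cos_sq (θ / 2)
    have hr : Real.sin (θ / 2) ^ 2 = (1 - Real.cos θ) / 2 := by linarith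
    rw [← htt, ← hcc]; exact_mod_cast congrArg (fun r : ℝ => (r : ℂ)) hr
  have hc2θ : ((Real.cos (2 * θ) : ℝ) : ℂ) = 2 * c ^ 2 - 1 := by
    have hr := Real.cos_two_mul θ
    rw [← hcc]; exact_mod_cast congrArg (fun r : ℝ => (r : ℂ)) hr
  have hc3θ : ((Real.cos (3 * θ) : ℝ) : ℂ) = 4 * c ^ 3 - 3 * c := by
    have hr := Real.cos_three_mul θ
    rw [← hcc]; exact_mod_cast congrArg (fun r : ℝ => (r : ℂ)) hr
  have hc4θ : ((Real.cos (4 * θ) : ℝ) : ℂ) = 8 * c ^ 4 - 8 * c ^ 2 + 1 := by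
    have h4 : (4 : ℝ) * θ = 2 * (2 * θ) := by ring
    have hr : Real.cos (4 * θ) = 8 * Real.cos θ ^ 4 - 8 * Real.cos θ ^ 2 + 1 := by
      rw [h4, Real.cos_two_mul (2 * θ), Real.cos_two_mul θ]; ring
    rw [← hcc]; exact_mod_cast congrArg (fun r : ℝ => (r : ℂ)) hr
  have hs2θ : ((Real.sin (2 * θ) : ℝ) : ℂ) = 2 * s * c := by
    have hr := Real.sin_two_mul θ
    rw [← hss, ← hcc]; exact_mod_cast congrArg (fun r : ℝ => (r : ℂ)) hr
  have hs3θ : ((Real.sin (3 * θ) : ℝ) : ℂ) = 3 * s - 4 * s ^ 3 := by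
    have hr := Real.sin_three_mul θ
    rw [← hss]; exact_mod_cast congrArg (fun r : ℝ => (r : ℂ)) hr
  -- nonvanishing
  have hc1 : (1 : ℂ) - c ≠ 0 := by
    rw [← hcc]
    intro h
    have h' : ((Real.cos θ : ℝ) : ℂ) = ((1 : ℝ) : ℂ) := by
      rw [Complex.ofReal_one]; linear_combination -h
    have : Real.cos θ = 1 := by exact_mod_cast h'
    linarith
  have hc1' : c - 1 ≠ 0 := fun h => hc1 (by linear_combination -h)
  have hcp : (1 : ℂ) + c ≠ 0 := by
    rw [← hcc]
    intro h
    have h' : ((Real.cos θ : ℝ) : ℂ) = ((-1 : ℝ) : ℂ) := by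
      rw [Complex.ofReal_neg, Complex.ofReal_one]; linear_combination h
    have : Real.cos θ = -1 := by exact_mod_cast h'
    linarith
  have hDr : 0 < (1 + Real.cos θ ^ 2) * (1 + 2 * Real.cos θ - Real.cos θ ^ 2) := by
    have h1 : (0:ℝ) < 1 + Real.cos θ ^ 2 := by positivity
    have h2' : (0:ℝ) < 1 + 2 * Real.cos θ - Real.cos θ ^ 2 := by nlinarith
    exact mul_pos h1 h2'
  have hD : ((1 + c ^ 2) * (1 + 2 * c - c ^ 2) : ℂ) ≠ 0 := by
    have : ((1 + c ^ 2) * (1 + 2 * c - c ^ 2) : ℂ) =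
        (((1 + Real.cos θ ^ 2) * (1 + 2 * Real.cos θ - Real.cos θ ^ 2) : ℝ) : ℂ) := by
      rw [← hcc]; push_cast; ring
    rw [this]
    exact Complex.ofReal_ne_zero.mpr (ne_of_gt hDr)
  have he : ((1 - c) * (1 + c) : ℂ) ≠ 0 := mul_ne_zero hc1 hcp
  -- bridges to polynomial matrices
  have hA2 : A2 θ = (2 : ℂ)⁻¹ • !![c ^ 3 - c ^ 2 + c + 1, -(Complex.I * s * c * (c - 1));
      Complex.I * s * c * (c - 1), -c ^ 3 + c ^ 2 + c + 1] := by
    rw [A2]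
    ext i j
    fin_cases i <;> fin_cases j <;>
      simp only [Matrix.smul_apply, Matrix.of_apply, Fin.zero_eta, Fin.mk_one, Matrix.cons_val', Matrix.cons_val_zero, Matrix.cons_val_one,
        Matrix.head_cons, Matrix.head_fin_const, Matrix.empty_val', Matrix.cons_val_fin_one,
        smul_eq_mul, Fin.isValue] <;>
      push_cast [-Complex.ofReal_sin, -Complex.ofReal_cos]
    · rw [hc2θ, hc3θ, hcc]; ring
    · rw [hs2θ, hs3θ, hss]; linear_combination (Complex.I * s / 2) * hs2
    · rw [htt, hss, hcc]; linear_combination (-Complex.I * s * c) * ht2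
    · rw [hc2θ, hc3θ, hcc]; ring
  have hC0 : C0 θ = ((1 - c) * (1 + c) : ℂ)⁻¹ •
      !![c ^ 3 + c ^ 2 - c + 1, -(Complex.I * s * c * (1 + c));
      Complex.I * s * c * (1 + c), (c + 1) * ((1 - c) * (1 + c))] := by
    have hs2' : s ^ 2 = (1 - c) * (1 + c) := by rw [hs2]; ring
    rw [C0]
    ext i j
    fin_cases i <;> fin_cases j <;>
      simp only [Matrix.smul_apply, Matrix.of_apply, Fin.zero_eta, Fin.mk_one, Matrix.cons_val', Matrix.cons_val_zero, Matrix.cons_val_one,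
        Matrix.head_cons, Matrix.head_fin_const, Matrix.empty_val', Matrix.cons_val_fin_one,
        smul_eq_mul, Fin.isValue] <;>
      push_cast [-Complex.ofReal_sin, -Complex.ofReal_cos]
    · rw [hc2θ, hc3θ, hcc, hss, hs2']
      field_simp
      ring
    · rw [hss, hcc]
      field_simp
      ring
    · rw [htt, hss, hcc, ht2]
      field_simp
      ring
    · rw [hcc]
      field_simp
  -- determinant-style identities
  have hNA_mul : (!![c ^ 3 - c ^ 2 + c + 1, -(Complex.I * s * c * (c - 1));
        Complex.I * s * c * (c - 1), -c ^ 3 + c ^ 2 + c + 1] : M2) *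
      !![-c ^ 3 + c ^ 2 + c + 1, Complex.I * s * c * (c - 1);
        -(Complex.I * s * c * (c - 1)), c ^ 3 - c ^ 2 + c + 1] =
      ((1 + c ^ 2) * (1 + 2 * c - c ^ 2) : ℂ) • (1 : M2) := by
    rw [Matrix.mul_fin_two]
    ext i j
    fin_cases i <;> fin_cases j <;>
      simp only [Matrix.smul_apply, Matrix.of_apply, Fin.zero_eta, Fin.mk_one, Matrix.cons_val', Matrix.cons_val_zero, Matrix.cons_val_one,
        Matrix.head_cons, Matrix.head_fin_const, Matrix.empty_val', Matrix.cons_val_fin_one,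
        Matrix.one_apply_eq, Matrix.one_apply_ne, smul_eq_mul, Fin.isValue, ne_eq,
        one_ne_zero, zero_ne_one, not_false_eq_true, mul_one, mul_zero]
    · linear_combination ((-1) * c^2 + 2 * c^3 + (-1) * c^4) * hs2 +
        (c^2 * s^2 - 2 * c^3 * s^2 + c^4 * s^2) * Complex.I_sq
    · ring
    · ring
    · linear_combination ((-1) * c^2 + 2 * c^3 + (-1) * c^4) * hs2 +
        (c^2 * s^2 - 2 * c^3 * s^2 + c^4 * s^2) * Complex.I_sq
  have hN0_mul : (!![c ^ 3 + c ^ 2 - c + 1, -(Complex.I * s * c * (1 + c));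
        Complex.I * s * c * (1 + c), (c + 1) * ((1 - c) * (1 + c))] : M2) *
      !![(c + 1) * ((1 - c) * (1 + c)), Complex.I * s * c * (1 + c);
        -(Complex.I * s * c * (1 + c)), c ^ 3 + c ^ 2 - c + 1] =
      (((1 - c) * (1 + c)) ^ 2 : ℂ) • (1 : M2) := by
    rw [Matrix.mul_fin_two]
    ext i j
    fin_cases i <;> fin_cases j <;>
      simp only [Matrix.smul_apply, Matrix.of_apply, Fin.zero_eta, Fin.mk_one, Matrix.cons_val', Matrix.cons_val_zero, Matrix.cons_val_one,
        Matrix.head_cons, Matrix.head_fin_const, Matrix.empty_val', Matrix.cons_val_fin_one,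
        Matrix.one_apply_eq, Matrix.one_apply_ne, smul_eq_mul, Fin.isValue, ne_eq,
        one_ne_zero, zero_ne_one, not_false_eq_true, mul_one, mul_zero]
    · linear_combination ((-1) * c^2 + (-2) * c^3 + (-1) * c^4) * hs2 +
        (c^2 * s^2 + 2 * c^3 * s^2 + c^4 * s^2) * Complex.I_sq
    · ring
    · ring
    · linear_combination ((-1) * c^2 + (-2) * c^3 + (-1) * c^4) * hs2 +
        (c^2 * s^2 + 2 * c^3 * s^2 + c^4 * s^2) * Complex.I_sq
  -- inverses
  have hC2eq : C2 θ w₂ = (w₂⁻¹ * 2⁻¹) • !![c ^ 3 - c ^ 2 + c + 1, -(Complex.I * s * c * (c - 1));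
      Complex.I * s * c * (c - 1), -c ^ 3 + c ^ 2 + c + 1] := by
    rw [C2, hA2, smul_smul]
  have hw2Dc : w₂ ^ 2 = (1 + c ^ 2) * (1 + 2 * c - c ^ 2) / 4 := by
    rw [h2, d2]
    push_cast [-Complex.ofReal_sin, -Complex.ofReal_cos]
    rw [hc2θ, hc3θ, hc4θ, hcc]
    ring
  have hC2inv : (C2 θ w₂)⁻¹ =
      (w₂ * 2 * ((1 + c ^ 2) * (1 + 2 * c - c ^ 2) : ℂ)⁻¹) •
      !![-c ^ 3 + c ^ 2 + c + 1, Complex.I * s * c * (c - 1);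
        -(Complex.I * s * c * (c - 1)), c ^ 3 - c ^ 2 + c + 1] := by
    apply Matrix.inv_eq_right_inv
    rw [hC2eq, Matrix.smul_mul, Matrix.mul_smul, hNA_mul, smul_smul, smul_smul]
    have hsc : (w₂⁻¹ * 2⁻¹ * (w₂ * 2 * ((1 + c ^ 2) * (1 + 2 * c - c ^ 2) : ℂ)⁻¹) *
        ((1 + c ^ 2) * (1 + 2 * c - c ^ 2))) = 1 := by field_simp; exact div_self hD
    rw [hsc, one_smul]
  have hC0inv : (C0 θ)⁻¹ = ((1 - c) * (1 + c) : ℂ)⁻¹ •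
      !![(c + 1) * ((1 - c) * (1 + c)), Complex.I * s * c * (1 + c);
        -(Complex.I * s * c * (1 + c)), c ^ 3 + c ^ 2 - c + 1] := by
    apply Matrix.inv_eq_right_inv
    rw [hC0, Matrix.smul_mul, Matrix.mul_smul, hN0_mul, smul_smul, smul_smul]
    have hsc : (((1 - c) * (1 + c) : ℂ)⁻¹ * ((1 - c) * (1 + c) : ℂ)⁻¹ *
        ((1 - c) * (1 + c)) ^ 2) = 1 := by field_simp
    rw [hsc, one_smul]
  -- trace of C2
  have htr : (C2 θ w₂).trace = w₂⁻¹ * (c + 1) := by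
    rw [hC2eq, Matrix.trace_smul, Matrix.trace_fin_two_of, smul_eq_mul]
    ring
  have htrsq : (C2 θ w₂).trace ^ 2 - 4 =
      4 * c ^ 2 * (1 - c) ^ 2 / ((1 + c ^ 2) * (1 + 2 * c - c ^ 2)) := by
    rw [htr, mul_pow, inv_pow, hw2Dc]
    rw [inv_div, div_eq_mul_inv, div_eq_mul_inv]
    linear_combination 4 * mul_inv_cancel₀ hD
  -- trace of commutator
  have hP : ((!![c ^ 3 - c ^ 2 + c + 1, -(Complex.I * s * c * (c - 1));
        Complex.I * s * c * (c - 1), -c ^ 3 + c ^ 2 + c + 1] : M2) *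
      !![c ^ 3 + c ^ 2 - c + 1, -(Complex.I * s * c * (1 + c));
        Complex.I * s * c * (1 + c), (c + 1) * ((1 - c) * (1 + c))] *
      !![-c ^ 3 + c ^ 2 + c + 1, Complex.I * s * c * (c - 1);
        -(Complex.I * s * c * (c - 1)), c ^ 3 - c ^ 2 + c + 1] *
      !![(c + 1) * ((1 - c) * (1 + c)), Complex.I * s * c * (1 + c);
        -(Complex.I * s * c * (1 + c)), c ^ 3 + c ^ 2 - c + 1]).trace =
      2 * ((1 - c) * (1 + c)) ^ 2 * ((1 + c ^ 2) * (1 + 2 * c - c ^ 2)) -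
        4 * (1 - c) ^ 3 * (1 + c) * c ^ 4 := by
    rw [Matrix.mul_fin_two, Matrix.mul_fin_two, Matrix.mul_fin_two, Matrix.trace_fin_two_of]
    linear_combination ((-4) * c^2 + (-4) * c^3 + (-14) * c^4 + 2 * c^4 * s^2 + (-8) * c^5 +
        (-2) * c^6 + (-4) * c^6 * s^2 + 4 * c^7 + (-6) * c^8 + 2 * c^8 * s^2 + 2 * c^10) * hs2 +
      (4 * c^2 * s^2 + 4 * c^3 * s^2 + 16 * c^4 * s^2 + (-2) * c^4 * s^4 +
        2 * c^4 * s^4 * Complex.I^2 + 8 * c^5 * s^2 + (-4) * c^6 * s^2 + 4 * c^6 * s^4 +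
        (-4) * c^6 * s^4 * Complex.I^2 + (-4) * c^7 * s^2 + 12 * c^8 * s^2 +
        (-2) * c^8 * s^4 + 2 * c^8 * s^4 * Complex.I^2 + (-4) * c^10 * s^2) * Complex.I_sq
  have hcomm : (C2 θ w₂ * C0 θ * (C2 θ w₂)⁻¹ * (C0 θ)⁻¹).trace =
      2 - 4 * c ^ 4 * (1 - c) / ((1 + c) * ((1 + c ^ 2) * (1 + 2 * c - c ^ 2))) := by
    rw [hC2inv, hC0inv, hC2eq, hC0]
    simp only [Matrix.smul_mul, Matrix.mul_smul, smul_smul]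
    rw [Matrix.trace_smul, smul_eq_mul, hP]
    have hscal : ((1 - c) * (1 + c))⁻¹ * (w₂ * 2 * ((1 + c ^ 2) * (1 + 2 * c - c ^ 2))⁻¹ *
        (((1 - c) * (1 + c))⁻¹ * (w₂⁻¹ * 2⁻¹))) =
        ((1 - c) * (1 + c))⁻¹ * ((1 - c) * (1 + c))⁻¹ *
          ((1 + c ^ 2) * (1 + 2 * c - c ^ 2))⁻¹ := by
      have hw' : w₂ * w₂⁻¹ = 1 := mul_inv_cancel₀ hw₂
      linear_combination (2 * ((1 + c ^ 2) * (1 + 2 * c - c ^ 2))⁻¹ *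
        (((1 - c) * (1 + c))⁻¹ * (((1 - c) * (1 + c))⁻¹ * 2⁻¹))) * hw'
    rw [hscal]
    generalize (1 + c ^ 2) * (1 + 2 * c - c ^ 2) = E at hD ⊢
    field_simp [hD, he, hcp, hc1]
  -- put it together
  have h1c : (C2 θ w₂).trace ^ 2 - 4 =
      ((4 * Real.cos θ ^ 2 * (1 - Real.cos θ) ^ 2 /
        ((1 + Real.cos θ ^ 2) * (1 + 2 * Real.cos θ - Real.cos θ ^ 2)) : ℝ) : ℂ) := by
    rw [htrsq]
    push_cast [-Complex.ofReal_sin, -Complex.ofReal_cos]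
    rw [hcc]
  have h2c : (C2 θ w₂ * C0 θ * (C2 θ w₂)⁻¹ * (C0 θ)⁻¹).trace - 2 =
      ((-(4 * Real.cos θ ^ 4 * (1 - Real.cos θ) /
        ((1 + Real.cos θ) * ((1 + Real.cos θ ^ 2) * (1 + 2 * Real.cos θ - Real.cos θ ^ 2)))) :
          ℝ) : ℂ) := by
    rw [hcomm]
    push_cast [-Complex.ofReal_sin, -Complex.ofReal_cos]
    rw [hcc]
    ring
  rw [h1c, h2c, Complex.norm_real, Complex.norm_real, Real.norm_eq_abs, Real.norm_eq_abs]
  have hv1 : |4 * Real.cos θ ^ 2 * (1 - Real.cos θ) ^ 2 /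
      ((1 + Real.cos θ ^ 2) * (1 + 2 * Real.cos θ - Real.cos θ ^ 2))| =
      4 * Real.cos θ ^ 2 * (1 - Real.cos θ) ^ 2 /
      ((1 + Real.cos θ ^ 2) * (1 + 2 * Real.cos θ - Real.cos θ ^ 2)) := by
    apply _root_.abs_of_nonneg
    apply div_nonneg _ hDr.le
    positivity
  have hp1 : 0 < 1 + Real.cos θ := by linarith
  have hv2 : |(-(4 * Real.cos θ ^ 4 * (1 - Real.cos θ) /
      ((1 + Real.cos θ) * ((1 + Real.cos θ ^ 2) * (1 + 2 * Real.cos θ - Real.cos θ ^ 2)))))| =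
      4 * Real.cos θ ^ 4 * (1 - Real.cos θ) /
      ((1 + Real.cos θ) * ((1 + Real.cos θ ^ 2) * (1 + 2 * Real.cos θ - Real.cos θ ^ 2))) := by
    rw [abs_neg]
    apply _root_.abs_of_nonneg
    apply div_nonneg _ (mul_pos hp1 hDr).le
    have : 0 ≤ 1 - Real.cos θ := by linarith
    positivity
  rw [hv1, hv2]
  have hsum : 4 * Real.cos θ ^ 2 * (1 - Real.cos θ) ^ 2 /
      ((1 + Real.cos θ ^ 2) * (1 + 2 * Real.cos θ - Real.cos θ ^ 2)) +
      4 * Real.cos θ ^ 4 * (1 - Real.cos θ) /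
      ((1 + Real.cos θ) * ((1 + Real.cos θ ^ 2) * (1 + 2 * Real.cos θ - Real.cos θ ^ 2))) =
      4 * Real.cos θ ^ 2 * (1 - Real.cos θ) /
      ((1 + Real.cos θ) * ((1 + Real.cos θ ^ 2) * (1 + 2 * Real.cos θ - Real.cos θ ^ 2))) := by
    field_simp
    ring
  rw [hsum, div_lt_one (mul_pos hp1 hDr)]
  nlinarith [mul_nonneg (mul_nonneg hx1.le hx1.le) (sub_nonneg.mpr hx2.le),
    pow_nonneg hx1.le 3, pow_nonneg hx1.le 4,
    mul_nonneg (pow_nonneg hx1.le 4) (sub_nonneg.mpr hx2.le),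
    mul_nonneg hx1.le (sub_nonneg.mpr hx2.le)]
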